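/- Let ℒ(W¹,…,W^L) = E[½‖y − W^L⋯W¹x‖²] be the population squared loss of a deep linear network. Then the second derivative block of ℒ with respect to W^k twice equals (W^{k+1:L} W^{L:k+1}) ⊗ (W^{k−1:1} Σ W^{1:k−1}), where Σ = E[xxᵀ], W^{k+1:L} = (W^{k+1})ᵀ⋯(W^L)ᵀ, and W^{k−1:1} = W^{k−1}⋯W¹. -/

import Mathlib

open Matrix Kronecker MeasureTheory

theorem quad_dd {n : Type*} [Fintype n] [DecidableEq n]
    (C : ℝ) (l : n → ℝ) (Q : n → n → ℝ) (f : (n → ℝ) → ℝ)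
    (hf : ∀ v, f v = C + (∑ i, l i * v i) + ∑ i, ∑ j, Q i j * (v i * v j))
    (v₀ : n → ℝ) (i j : n) :
    fderiv ℝ (fun v => fderiv ℝ f v (Pi.single j 1)) v₀ (Pi.single i 1) = Q i j + Q j i := by
  classical
  set pr : n → (n → ℝ) →L[ℝ] ℝ := fun a => ContinuousLinearMap.proj (R := ℝ) (φ := fun _ : n => ℝ) a with hpr
  have hpra : ∀ (a : n) (u : n → ℝ), pr a u = u a := fun a u => rfl
  have hprd : ∀ (a : n) (v : n → ℝ), HasFDerivAt (fun w : n → ℝ => w a) (pr a) v := by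
    intro a v
    exact (ContinuousLinearMap.proj (R := ℝ) (φ := fun _ : n => ℝ) a).hasFDerivAt
  set D : (n → ℝ) → (n → ℝ) →L[ℝ] ℝ := fun v =>
    (∑ a, l a • pr a) + ∑ a, ∑ b, Q a b • (v a • pr b + v b • pr a) with hD
  have hDf : ∀ v, HasFDerivAt f (D v) v := by
    intro v
    have h1 : HasFDerivAt (fun v : n → ℝ => C + (∑ a, l a * v a) + ∑ a, ∑ b, Q a b * (v a * v b)) (D v) v := by
      apply HasFDerivAt.add
      · exact (HasFDerivAt.fun_sum (fun a _ => (hprd a v).const_mul (l a))).const_add C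
      · exact HasFDerivAt.fun_sum fun a _ => HasFDerivAt.fun_sum fun b _ =>
          ((hprd a v).mul (hprd b v)).const_mul (Q a b)
    exact h1.congr_of_eventuallyEq (by filter_upwards with w; rw [hf w])
  have hfd : ∀ v, fderiv ℝ f v = D v := fun v => (hDf v).fderiv
  have happ : ∀ v : n → ℝ, fderiv ℝ f v (Pi.single j 1)
      = l j + ((∑ b, Q j b * v b) + ∑ a, Q a j * v a) := by
    intro v
    rw [hfd v, hD]
    simp only [ContinuousLinearMap.add_apply, ContinuousLinearMap.sum_apply,
      ContinuousLinearMap.smul_apply, smul_eq_mul, hpra,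
      Pi.single_apply, mul_ite, mul_one, mul_zero, mul_add]
    rw [Finset.sum_ite_eq' Finset.univ j l]
    simp only [Finset.mem_univ, if_true]
    congr 1
    have e2 : (∑ x : n, ∑ x1 : n, if x = j then Q x x1 * v x1 else 0)
        = ∑ x1 : n, Q j x1 * v x1 := by
      rw [Finset.sum_comm]; simp
    simp only [Finset.sum_add_distrib, e2]
    simp only [Finset.sum_ite_eq' Finset.univ j, Finset.mem_univ, if_true]
    exact add_comm _ _
  set E : (n → ℝ) →L[ℝ] ℝ := (∑ b, Q j b • pr b) + ∑ a, Q a j • pr a with hE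
  have hgE : HasFDerivAt (fun v => fderiv ℝ f v (Pi.single j 1)) E v₀ := by
    have h2 : HasFDerivAt (fun v : n → ℝ => l j + ((∑ b, Q j b * v b) + ∑ a, Q a j * v a)) E v₀ := by
      apply HasFDerivAt.const_add
      exact (HasFDerivAt.fun_sum (fun b _ => (hprd b v₀).const_mul (Q j b))).add
        (HasFDerivAt.fun_sum (fun a _ => (hprd a v₀).const_mul (Q a j)))
    exact h2.congr_of_eventuallyEq (by filter_upwards with w; rw [happ w])
  rw [hgE.fderiv, hE]
  simp only [ContinuousLinearMap.add_apply, ContinuousLinearMap.sum_apply,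
    ContinuousLinearMap.smul_apply, smul_eq_mul, hpra, Pi.single_apply, mul_ite, mul_one, mul_zero]
  simp only [Finset.sum_ite_eq' Finset.univ i, Finset.mem_univ, if_true]
  exact add_comm _ _

theorem hessian_diagonal_block_deep_linear (L k : ℕ) (hk : k < L) (M : ℕ → ℕ)
    (W : ∀ l : ℕ, Matrix (Fin (M (l+1))) (Fin (M l)) ℝ)
    -- `S l` is the suffix product `W (L-1) * ⋯ * W l`, so `S (k+1)` is `W^{L:k+2⋯}` above layer `k`
    (S : ∀ l : ℕ, Matrix (Fin (M L)) (Fin (M l)) ℝ)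
    (hSL : S L = 1) (hS : ∀ l < L, S l = S (l+1) * W l)
    -- `F l` is the transposed prefix product `(W 0)ᵀ * ⋯ * (W (l-1))ᵀ`
    (F : ∀ l : ℕ, Matrix (Fin (M 0)) (Fin (M l)) ℝ)
    (hF0 : F 0 = 1) (hF : ∀ l < L, F (l+1) = F l * (W l)ᵀ)
    -- data distribution on input-output pairs
    (μ : Measure ((Fin (M 0) → ℝ) × (Fin (M L) → ℝ))) [IsProbabilityMeasure μ]
    (hInt : Integrable (fun p => (‖p.1‖ + ‖p.2‖) ^ 2) μ)
    -- the (uncentered) input covariance Σ = E[x xᵀ]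
    (Scov : Matrix (Fin (M 0)) (Fin (M 0)) ℝ)
    (hScov : ∀ a b, Scov a b = ∫ p, p.1 a * p.1 b ∂μ)
    -- the population squared loss as a function of vec_r(W^k), the other weights fixed
    (f : (Fin (M (k+1)) × Fin (M k) → ℝ) → ℝ)
    (hf : ∀ v, f v = ∫ p, (1/2) * ∑ c,
      (p.2 c - ((S (k+1) * Matrix.of (fun i j => v (i, j)) * (F k)ᵀ) *ᵥ p.1) c) ^ 2 ∂μ) :
    ∀ (v₀ : Fin (M (k+1)) × Fin (M k) → ℝ) (i j : Fin (M (k+1)) × Fin (M k)),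
      fderiv ℝ (fun v => fderiv ℝ f v (Pi.single j 1)) v₀ (Pi.single i 1)
        = (((S (k+1))ᵀ * S (k+1)) ⊗ₖ ((F k)ᵀ * Scov * F k)) i j := by
  classical
  intro v₀ i j
  set A := S (k+1) with hA
  set B := (F k)ᵀ with hB
  set a : Fin (M L) → (Fin (M (k+1)) × Fin (M k)) → ((Fin (M 0) → ℝ) × (Fin (M L) → ℝ)) → ℝ := fun c i p => A c i.1 * (B *ᵥ p.1) i.2 with ha
  -- key linear expansion of the prediction
  have hkey : ∀ (v : Fin (M (k+1)) × Fin (M k) → ℝ) (p : (Fin (M 0) → ℝ) × (Fin (M L) → ℝ)) (c : Fin (M L)),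
      ((A * Matrix.of (fun i j => v (i, j)) * B) *ᵥ p.1) c = ∑ i : Fin (M (k+1)) × Fin (M k), v i * a c i p := by
    intro v p c
    simp only [ha, Matrix.mulVec, Matrix.mul_apply, dotProduct, Matrix.of_apply,
      Fintype.sum_prod_type, Finset.sum_mul, Finset.mul_sum]
    refine (Finset.sum_comm).trans ?_
    refine (Finset.sum_congr rfl fun y _ => Finset.sum_comm).trans ?_
    refine (Finset.sum_comm).trans ?_
    exact Finset.sum_congr rfl fun i' _ => Finset.sum_congr rfl fun y _ =>
      Finset.sum_congr rfl fun x _ => by ring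
  -- pointwise expansion of products of predictions
  have haa : ∀ (c : Fin (M L)) (i' j' : Fin (M (k+1)) × Fin (M k)) (p : (Fin (M 0) → ℝ) × (Fin (M L) → ℝ)),
      a c i' p * a c j' p
        = ∑ d, ∑ e, ((A c i'.1 * B i'.2 d) * (A c j'.1 * B j'.2 e)) * (p.1 d * p.1 e) := by
    intro c i' j' p
    simp only [ha, Matrix.mulVec, dotProduct, Finset.mul_sum, Finset.sum_mul]
    rw [Finset.sum_comm]
    refine Finset.sum_congr rfl fun d _ => ?_
    refine Finset.sum_congr rfl fun e _ => by ring
  have hya : ∀ (c : Fin (M L)) (i' : Fin (M (k+1)) × Fin (M k)) (p : (Fin (M 0) → ℝ) × (Fin (M L) → ℝ)),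
      p.2 c * a c i' p = ∑ d, (A c i'.1 * B i'.2 d) * (p.2 c * p.1 d) := by
    intro c i' p
    simp only [ha, Matrix.mulVec, dotProduct, Finset.mul_sum]
    refine Finset.sum_congr rfl fun d _ => by ring
  -- base integrability facts
  have hmx : ∀ d : Fin (M 0), Measurable fun p : (Fin (M 0) → ℝ) × (Fin (M L) → ℝ) => p.1 d :=
    fun d => (measurable_pi_apply d).comp measurable_fst
  have hmy : ∀ c : Fin (M L), Measurable fun p : (Fin (M 0) → ℝ) × (Fin (M L) → ℝ) => p.2 c :=
    fun c => (measurable_pi_apply c).comp measurable_snd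
  have hIyy : ∀ c : Fin (M L), Integrable (fun p : (Fin (M 0) → ℝ) × (Fin (M L) → ℝ) => p.2 c * p.2 c) μ := by
    intro c
    refine hInt.mono' (((hmy c).mul (hmy c)).aestronglyMeasurable) (ae_of_all _ fun p => ?_)
    have h1 : |p.2 c| ≤ ‖p.2‖ := by simpa [Real.norm_eq_abs] using norm_le_pi_norm p.2 c
    have h2 : (0:ℝ) ≤ ‖p.1‖ := norm_nonneg _
    have h3 : (0:ℝ) ≤ ‖p.2‖ := norm_nonneg _
    rw [Real.norm_eq_abs, abs_mul]
    nlinarith [abs_nonneg (p.2 c)]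
  have hIyx : ∀ (c : Fin (M L)) (d : Fin (M 0)),
      Integrable (fun p : (Fin (M 0) → ℝ) × (Fin (M L) → ℝ) => p.2 c * p.1 d) μ := by
    intro c d
    refine hInt.mono' (((hmy c).mul (hmx d)).aestronglyMeasurable) (ae_of_all _ fun p => ?_)
    have h1 : |p.2 c| ≤ ‖p.2‖ := by simpa [Real.norm_eq_abs] using norm_le_pi_norm p.2 c
    have h2 : |p.1 d| ≤ ‖p.1‖ := by simpa [Real.norm_eq_abs] using norm_le_pi_norm p.1 d
    have h3 : (0:ℝ) ≤ ‖p.1‖ := norm_nonneg _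
    have h4 : (0:ℝ) ≤ ‖p.2‖ := norm_nonneg _
    rw [Real.norm_eq_abs, abs_mul]
    nlinarith [abs_nonneg (p.2 c), abs_nonneg (p.1 d)]
  have hIxx : ∀ (d e : Fin (M 0)),
      Integrable (fun p : (Fin (M 0) → ℝ) × (Fin (M L) → ℝ) => p.1 d * p.1 e) μ := by
    intro d e
    refine hInt.mono' (((hmx d).mul (hmx e)).aestronglyMeasurable) (ae_of_all _ fun p => ?_)
    have h1 : |p.1 d| ≤ ‖p.1‖ := by simpa [Real.norm_eq_abs] using norm_le_pi_norm p.1 d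
    have h2 : |p.1 e| ≤ ‖p.1‖ := by simpa [Real.norm_eq_abs] using norm_le_pi_norm p.1 e
    have h3 : (0:ℝ) ≤ ‖p.1‖ := norm_nonneg _
    have h4 : (0:ℝ) ≤ ‖p.2‖ := norm_nonneg _
    rw [Real.norm_eq_abs, abs_mul]
    nlinarith [abs_nonneg (p.1 d), abs_nonneg (p.1 e)]
  -- derived integrability
  have hIya : ∀ (c : Fin (M L)) (i' : Fin (M (k+1)) × Fin (M k)),
      Integrable (fun p => p.2 c * a c i' p) μ := by
    intro c i'
    have he : (fun p : (Fin (M 0) → ℝ) × (Fin (M L) → ℝ) => p.2 c * a c i' p)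
        = fun p => ∑ d, (A c i'.1 * B i'.2 d) * (p.2 c * p.1 d) := funext fun p => hya c i' p
    rw [he]
    exact integrable_finset_sum _ fun d _ => (hIyx c d).const_mul _
  have hIaa : ∀ (c : Fin (M L)) (i' j' : Fin (M (k+1)) × Fin (M k)),
      Integrable (fun p => a c i' p * a c j' p) μ := by
    intro c i' j'
    have he : (fun p : (Fin (M 0) → ℝ) × (Fin (M L) → ℝ) => a c i' p * a c j' p)
        = fun p => ∑ d, ∑ e, ((A c i'.1 * B i'.2 d) * (A c j'.1 * B j'.2 e)) * (p.1 d * p.1 e) :=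
      funext fun p => haa c i' j' p
    rw [he]
    exact integrable_finset_sum _ fun d _ => integrable_finset_sum _ fun e _ => (hIxx d e).const_mul _
  have hIT0 : Integrable (fun p : (Fin (M 0) → ℝ) × (Fin (M L) → ℝ) => (1/2 : ℝ) * ∑ c, (p.2 c)^2) μ :=
    (integrable_finset_sum _ fun c _ => by simpa [sq] using hIyy c).const_mul _
  have hIT1 : ∀ i' : Fin (M (k+1)) × Fin (M k),
      Integrable (fun p => -(∑ c, p.2 c * a c i' p)) μ :=
    fun i' => (integrable_finset_sum _ fun c _ => hIya c i').neg
  have hIT2 : ∀ i' j' : Fin (M (k+1)) × Fin (M k),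
      Integrable (fun p => (1/2 : ℝ) * ∑ c, a c i' p * a c j' p) μ :=
    fun i' j' => (integrable_finset_sum _ fun c _ => hIaa c i' j').const_mul _
  -- quadratic representation of f
  set C0 : ℝ := ∫ p, (1/2 : ℝ) * ∑ c, (p.2 c)^2 ∂μ with hC0
  set lc : (Fin (M (k+1)) × Fin (M k)) → ℝ := fun i' => ∫ p, -(∑ c, p.2 c * a c i' p) ∂μ with hlc
  set Qc : (Fin (M (k+1)) × Fin (M k)) → (Fin (M (k+1)) × Fin (M k)) → ℝ :=
    fun i' j' => ∫ p, (1/2 : ℝ) * ∑ c, a c i' p * a c j' p ∂μ with hQc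
  have hrep : ∀ v, f v = C0 + (∑ i', lc i' * v i') + ∑ i', ∑ j', Qc i' j' * (v i' * v j') := by
    intro v
    rw [hf v]
    have hptw : (fun p : (Fin (M 0) → ℝ) × (Fin (M L) → ℝ) =>
          (1/2 : ℝ) * ∑ c, (p.2 c - ((A * Matrix.of (fun i j => v (i, j)) * B) *ᵥ p.1) c)^2)
        = fun p => ((1/2 : ℝ) * ∑ c, (p.2 c)^2)
            + ((∑ i', (-(∑ c, p.2 c * a c i' p)) * v i')
              + ∑ i', ∑ j', ((1/2 : ℝ) * ∑ c, a c i' p * a c j' p) * (v i' * v j')) := by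
      funext p
      have hk2 : ∀ c, ((A * Matrix.of (fun i j => v (i, j)) * B) *ᵥ p.1) c
          = ∑ i', v i' * a c i' p := fun c => hkey v p c
      simp only [hk2]
      have hsq : ∀ c, (p.2 c - ∑ i', v i' * a c i' p)^2
          = (p.2 c)^2 - (∑ i', (2 * (p.2 c * a c i' p)) * v i')
            + ∑ i', ∑ j', (a c i' p * a c j' p) * (v i' * v j') := by
        intro c
        have h2 : (∑ i', v i' * a c i' p) * (∑ j', v j' * a c j' p)
            = ∑ i', ∑ j', (a c i' p * a c j' p) * (v i' * v j') := by
          rw [Finset.sum_mul_sum]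
          exact Finset.sum_congr rfl fun i' _ => Finset.sum_congr rfl fun j' _ => by ring
        have h3 : (2:ℝ) * (p.2 c * ∑ i', v i' * a c i' p)
            = ∑ i', (2 * (p.2 c * a c i' p)) * v i' := by
          rw [Finset.mul_sum, Finset.mul_sum]
          exact Finset.sum_congr rfl fun i' _ => by ring
        calc (p.2 c - ∑ i', v i' * a c i' p)^2
            = (p.2 c)^2 - 2 * (p.2 c * ∑ i', v i' * a c i' p)
              + (∑ i', v i' * a c i' p) * (∑ j', v j' * a c j' p) := by ring
          _ = _ := by rw [h3, h2]
      simp only [hsq]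
      rw [Finset.sum_add_distrib, Finset.sum_sub_distrib]
      have hY : (∑ c, ∑ i', (2 * (p.2 c * a c i' p)) * v i')
          = ∑ i', (2 * ∑ c, p.2 c * a c i' p) * v i' := by
        rw [Finset.sum_comm]
        refine Finset.sum_congr rfl fun i' _ => ?_
        rw [← Finset.sum_mul]
        congr 1
        rw [← Finset.mul_sum]
      have hZ : (∑ c, ∑ i', ∑ j', (a c i' p * a c j' p) * (v i' * v j'))
          = ∑ i', ∑ j', (∑ c, a c i' p * a c j' p) * (v i' * v j') := by
        rw [Finset.sum_comm]
        refine Finset.sum_congr rfl fun i' _ => ?_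
        rw [Finset.sum_comm]
        refine Finset.sum_congr rfl fun j' _ => ?_
        rw [← Finset.sum_mul]
      rw [hY, hZ]
      have hW1 : (∑ i', (-(∑ c, p.2 c * a c i' p)) * v i')
          = (-1/2 : ℝ) * ∑ i', (2 * ∑ c, p.2 c * a c i' p) * v i' := by
        rw [Finset.mul_sum]
        exact Finset.sum_congr rfl fun i' _ => by ring
      have hW2 : (∑ i', ∑ j', ((1/2 : ℝ) * ∑ c, a c i' p * a c j' p) * (v i' * v j'))
          = (1/2 : ℝ) * ∑ i', ∑ j', (∑ c, a c i' p * a c j' p) * (v i' * v j') := by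
        rw [Finset.mul_sum]
        refine Finset.sum_congr rfl fun i' _ => ?_
        rw [Finset.mul_sum]
        exact Finset.sum_congr rfl fun j' _ => by ring
      rw [hW1, hW2]
      ring
    rw [hptw]
    have hIg1 : Integrable (fun p => ∑ i', (-(∑ c, p.2 c * a c i' p)) * v i') μ :=
      integrable_finset_sum _ fun i' _ => (hIT1 i').mul_const _
    have hIg2 : Integrable (fun p => ∑ i', ∑ j',
        ((1/2 : ℝ) * ∑ c, a c i' p * a c j' p) * (v i' * v j')) μ :=
      integrable_finset_sum _ fun i' _ => integrable_finset_sum _ fun j' _ => (hIT2 i' j').mul_const _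
    have hIg12 : Integrable (fun p => (∑ i', (-(∑ c, p.2 c * a c i' p)) * v i')
        + ∑ i', ∑ j', ((1/2 : ℝ) * ∑ c, a c i' p * a c j' p) * (v i' * v j')) μ := hIg1.add hIg2
    rw [integral_add hIT0 hIg12, integral_add hIg1 hIg2]
    have e1 : (∫ p, ∑ i', (-(∑ c, p.2 c * a c i' p)) * v i' ∂μ) = ∑ i', lc i' * v i' := by
      rw [integral_finset_sum _ fun i' _ => (hIT1 i').mul_const _]
      exact Finset.sum_congr rfl fun i' _ => integral_mul_const _ _
    have e2 : (∫ p, ∑ i', ∑ j', ((1/2 : ℝ) * ∑ c, a c i' p * a c j' p) * (v i' * v j') ∂μ)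
        = ∑ i', ∑ j', Qc i' j' * (v i' * v j') := by
      rw [integral_finset_sum _ fun i' _ => integrable_finset_sum _ fun j' _ => (hIT2 i' j').mul_const _]
      refine Finset.sum_congr rfl fun i' _ => ?_
      rw [integral_finset_sum _ fun j' _ => (hIT2 i' j').mul_const _]
      exact Finset.sum_congr rfl fun j' _ => integral_mul_const _ _
    rw [e1, e2, ← hC0]
    ring
  -- apply the quadratic second-derivative lemma
  rw [quad_dd C0 lc Qc f hrep v₀ i j]
  -- evaluate Qc
  have hQval : ∀ i' j' : Fin (M (k+1)) × Fin (M k),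
      Qc i' j' = (1/2 : ℝ) * ((Aᵀ * A) i'.1 j'.1 * (((F k)ᵀ * Scov * F k) i'.2 j'.2)) := by
    intro i' j'
    have he : (fun p : (Fin (M 0) → ℝ) × (Fin (M L) → ℝ) => (1/2 : ℝ) * ∑ c, a c i' p * a c j' p)
        = fun p => (1/2 : ℝ) * ∑ c, ∑ d, ∑ e,
            ((A c i'.1 * B i'.2 d) * (A c j'.1 * B j'.2 e)) * (p.1 d * p.1 e) := by
      funext p
      congr 1
      exact Finset.sum_congr rfl fun c _ => haa c i' j' p
    rw [hQc]
    simp only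
    rw [he, integral_const_mul,
      integral_finset_sum _ (fun c _ => integrable_finset_sum _ fun d _ =>
        integrable_finset_sum _ fun e _ => (hIxx d e).const_mul _)]
    have hc : ∀ c : Fin (M L), (∫ p, ∑ d, ∑ e,
          ((A c i'.1 * B i'.2 d) * (A c j'.1 * B j'.2 e)) * (p.1 d * p.1 e) ∂μ)
        = ∑ d, ∑ e, ((A c i'.1 * B i'.2 d) * (A c j'.1 * B j'.2 e)) * Scov d e := by
      intro c
      rw [integral_finset_sum _ (fun d _ => integrable_finset_sum _ fun e _ => (hIxx d e).const_mul _)]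
      refine Finset.sum_congr rfl fun d _ => ?_
      rw [integral_finset_sum _ (fun e _ => (hIxx d e).const_mul _)]
      refine Finset.sum_congr rfl fun e _ => ?_
      rw [integral_const_mul, ← hScov]
    simp only [hc]
    congr 1
    -- algebra: triple sum equals product of matrix entries
    simp only [Matrix.mul_apply, Matrix.transpose_apply, hB]
    rw [Finset.sum_mul_sum]
    refine Finset.sum_congr rfl fun c _ => ?_
    rw [Finset.sum_comm]
    refine Finset.sum_congr rfl fun e _ => ?_
    rw [Finset.sum_mul, Finset.mul_sum]
    refine Finset.sum_congr rfl fun d _ => by ring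
  have hsymScov : ∀ d e, Scov d e = Scov e d := by
    intro d e
    rw [hScov, hScov]
    exact integral_congr_ae (Filter.Eventually.of_forall fun p => mul_comm _ _)
  have hsymA : (Aᵀ * A) j.1 i.1 = (Aᵀ * A) i.1 j.1 := by
    simp only [Matrix.mul_apply, Matrix.transpose_apply]
    exact Finset.sum_congr rfl fun c _ => mul_comm _ _
  have hsymX : ((F k)ᵀ * Scov * F k) j.2 i.2 = ((F k)ᵀ * Scov * F k) i.2 j.2 := by
    simp only [Matrix.mul_apply, Matrix.transpose_apply, Finset.sum_mul]
    rw [Finset.sum_comm]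
    refine Finset.sum_congr rfl fun x _ => ?_
    refine Finset.sum_congr rfl fun y _ => ?_
    rw [hsymScov]
    ring
  rw [hQval i j, hQval j i, hsymA, hsymX]
  simp only [Matrix.kroneckerMap_apply]
  ring
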